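/- If N ~ PTE(α,θ) and Y₁, Y₂, … are i.i.d. Erlang(2,λ) independent of N, then S = Σ_{i=1}^{N} Y_i has density f_S(y) = λθe^{-λy}[(1-α)sinh(yλ/√(1+θ))/(1+θ)^{3/2} + 2α·sinh(yλ/√(1+2θ))/(1+2θ)^{3/2}] for y > 0, with an atom at zero of mass θ((1-α)/(1+θ) + 2α/(1+2θ)). -/

import Mathlib

lemma hasSum_exp_real (u : ℝ) :
    HasSum (fun n : ℕ => u ^ n / (Nat.factorial n : ℝ)) (Real.exp u) := by
  rw [Real.exp_eq_exp_ℝ]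
  exact NormedSpace.expSeries_div_hasSum_exp u

lemma hasSum_sinh' (u : ℝ) :
    HasSum (fun k : ℕ => u ^ (2 * k + 1) / (Nat.factorial (2 * k + 1) : ℝ))
      (Real.sinh u) := by
  have h3 : HasSum (fun n : ℕ => (u ^ n / n.factorial - (-u) ^ n / n.factorial) / 2)
      (Real.sinh u) := by
    rw [Real.sinh_eq]
    exact ((hasSum_exp_real u).sub (hasSum_exp_real (-u))).div_const 2
  have hinj : Function.Injective (fun k : ℕ => 2 * k + 1) := by
    intro a b h; simp only [] at h; omega
  have h0 : ∀ n ∉ Set.range (fun k : ℕ => 2 * k + 1),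
      (fun n : ℕ => (u ^ n / n.factorial - (-u) ^ n / n.factorial) / 2) n = 0 := by
    intro n hn
    have hev : Even n := by
      rcases Nat.even_or_odd n with h | h
      · exact h
      · exfalso; obtain ⟨k, hk⟩ := h
        exact hn ⟨k, by simp only []; omega⟩
    simp [hev.neg_pow]
  have h4 := (Function.Injective.hasSum_iff hinj h0).2 h3
  refine h4.congr_fun fun k => ?_
  have hodd : Odd (2 * k + 1) := ⟨k, by ring⟩
  simp only [Function.comp_apply]
  rw [hodd.neg_pow]
  ring

lemma key_alg (a lam y c F : ℝ) (ha : 0 < a) (k : ℕ) :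
    c / a ^ ((3 : ℝ)/2) * ((y * lam / Real.sqrt a) ^ (2 * k + 1) / F)
      = c / a ^ (k + 2) * (lam ^ (2 * k + 1) * y ^ (2 * k + 1) / F) := by
  have hs : 0 < Real.sqrt a := Real.sqrt_pos.2 ha
  have h32 : a ^ ((3 : ℝ)/2) = a * Real.sqrt a := by
    rw [show (3 : ℝ)/2 = 1 + 1/2 by norm_num, Real.rpow_add ha, Real.rpow_one,
      ← Real.sqrt_eq_rpow]
  have hpow : (Real.sqrt a) ^ (2 * k + 1) = a ^ k * Real.sqrt a := by
    rw [pow_succ, pow_mul, Real.sq_sqrt ha.le]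
  rcases eq_or_ne F 0 with hF | hF
  · simp [hF]
  rw [h32, div_pow, hpow]
  have ha' : a ≠ 0 := ha.ne'
  have hs' : Real.sqrt a ≠ 0 := hs.ne'
  field_simp
  rw [Real.sq_sqrt ha.le]
  ring

/-- Aggregate-claim density for PTE frequency and Erlang(2,λ) severities,
with the atom at zero. -/
theorem pte_compound_erlang (α θ lam : ℝ) (hα : |α| ≤ 1) (hθ : 0 < θ)
    (hlam : 0 < lam)
    (p : ℕ → ℝ)
    (hp : ∀ x : ℕ, p x = θ * ((1 - α) / (1 + θ) ^ (x + 1) + 2 * α / (1 + 2 * θ) ^ (x + 1))) :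
    (∀ y : ℝ, 0 < y →
      (∑' x : ℕ, p (x + 1) * (lam ^ (2 * (x + 1)) * y ^ (2 * (x + 1) - 1) *
          Real.exp (-lam * y) / (Nat.factorial (2 * (x + 1) - 1) : ℝ)))
        = lam * θ * Real.exp (-lam * y) *
            ((1 - α) * Real.sinh (y * lam / Real.sqrt (1 + θ)) / (1 + θ) ^ ((3 : ℝ) / 2)
              + 2 * α * Real.sinh (y * lam / Real.sqrt (1 + 2 * θ)) /
                  (1 + 2 * θ) ^ ((3 : ℝ) / 2))) ∧
    p 0 = θ * ((1 - α) / (1 + θ) + 2 * α / (1 + 2 * θ)) := by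
  have hA : (0 : ℝ) < 1 + θ := by linarith
  have hB : (0 : ℝ) < 1 + 2 * θ := by linarith
  constructor
  · intro y hy
    have E : ℝ := lam * θ * Real.exp (-lam * y)
    have Hterm : ∀ k : ℕ,
        p (k + 1) * (lam ^ (2 * (k + 1)) * y ^ (2 * (k + 1) - 1) *
            Real.exp (-lam * y) / (Nat.factorial (2 * (k + 1) - 1) : ℝ))
        = (lam * θ * Real.exp (-lam * y) * (1 - α) / (1 + θ) ^ ((3 : ℝ)/2)) *
            ((y * lam / Real.sqrt (1 + θ)) ^ (2 * k + 1) / (Nat.factorial (2 * k + 1) : ℝ))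
          + (lam * θ * Real.exp (-lam * y) * (2 * α) / (1 + 2 * θ) ^ ((3 : ℝ)/2)) *
            ((y * lam / Real.sqrt (1 + 2 * θ)) ^ (2 * k + 1) /
              (Nat.factorial (2 * k + 1) : ℝ)) := by
      intro k
      have hk : 2 * (k + 1) - 1 = 2 * k + 1 := by omega
      rw [hk, hp]
      have e1 := key_alg (1 + θ) lam y (lam * θ * Real.exp (-lam * y) * (1 - α))
        (Nat.factorial (2 * k + 1) : ℝ) hA k
      have e2 := key_alg (1 + 2 * θ) lam y (lam * θ * Real.exp (-lam * y) * (2 * α))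
        (Nat.factorial (2 * k + 1) : ℝ) hB k
      rw [div_mul_eq_mul_div, div_mul_eq_mul_div] at e1 e2 ⊢
      rw [e1, e2]
      have hfA : ((1 + θ) ^ (k + 2) : ℝ) ≠ 0 := by positivity
      have hfB : ((1 + 2 * θ) ^ (k + 2) : ℝ) ≠ 0 := by positivity
      have hFf : ((Nat.factorial (2 * k + 1) : ℝ)) ≠ 0 := by positivity
      have hk2 : (k + 1) + 1 = k + 2 := by omega
      rw [hk2]
      field_simp
      ring
    calc (∑' x : ℕ, p (x + 1) * (lam ^ (2 * (x + 1)) * y ^ (2 * (x + 1) - 1) *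
          Real.exp (-lam * y) / (Nat.factorial (2 * (x + 1) - 1) : ℝ)))
        = ∑' k : ℕ,
          ((lam * θ * Real.exp (-lam * y) * (1 - α) / (1 + θ) ^ ((3 : ℝ)/2)) *
            ((y * lam / Real.sqrt (1 + θ)) ^ (2 * k + 1) / (Nat.factorial (2 * k + 1) : ℝ))
          + (lam * θ * Real.exp (-lam * y) * (2 * α) / (1 + 2 * θ) ^ ((3 : ℝ)/2)) *
            ((y * lam / Real.sqrt (1 + 2 * θ)) ^ (2 * k + 1) /
              (Nat.factorial (2 * k + 1) : ℝ))) := tsum_congr Hterm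
      _ = (lam * θ * Real.exp (-lam * y) * (1 - α) / (1 + θ) ^ ((3 : ℝ)/2)) *
            Real.sinh (y * lam / Real.sqrt (1 + θ))
          + (lam * θ * Real.exp (-lam * y) * (2 * α) / (1 + 2 * θ) ^ ((3 : ℝ)/2)) *
            Real.sinh (y * lam / Real.sqrt (1 + 2 * θ)) :=
        (((hasSum_sinh' _).mul_left _).add ((hasSum_sinh' _).mul_left _)).tsum_eq
      _ = lam * θ * Real.exp (-lam * y) *
            ((1 - α) * Real.sinh (y * lam / Real.sqrt (1 + θ)) / (1 + θ) ^ ((3 : ℝ) / 2)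
              + 2 * α * Real.sinh (y * lam / Real.sqrt (1 + 2 * θ)) /
                  (1 + 2 * θ) ^ ((3 : ℝ) / 2)) := by ring
  · rw [hp]; norm_num
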